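/- Define ρ(z) = (z+1)^{1+β} - z^{1+β} - 1 for z > 0 and 0 < β < 1. Then ρ(z) < 2(2^β - 1) z^β for all 0 < z < 1. -/

import Mathlib

open Real Set

/-- Strict weighted AM-GM for the pair `(x, x+1)`. -/
lemma rho_amgm {β x : ℝ} (hβ0 : 0 < β) (hβ1 : β < 1) (hx : 0 < x) :
    x ^ β * (x + 1) ^ (1 - β) < x + 1 - β := by
  have hx1 : (0:ℝ) < x + 1 := by linarith
  have hne : x ≠ x + 1 := by intro h; linarith [h.symm ▸ (lt_add_one x)]
  have h := strictConcaveOn_log_Ioi.2 (mem_Ioi.2 hx) (mem_Ioi.2 hx1) hne hβ0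
    (by linarith : 0 < 1 - β) (by ring)
  simp only [smul_eq_mul] at h
  have hpt : β * x + (1 - β) * (x + 1) = x + 1 - β := by ring
  rw [hpt] at h
  have hpos : (0:ℝ) < x + 1 - β := by nlinarith
  calc x ^ β * (x + 1) ^ (1 - β)
      = exp (β * log x + (1 - β) * log (x + 1)) := by
        rw [exp_add, rpow_def_of_pos hx, rpow_def_of_pos hx1]; ring_nf
    _ < exp (log (x + 1 - β)) := exp_lt_exp.2 h
    _ = x + 1 - β := exp_log hpos

lemma rho_phi_deriv {β x : ℝ} (hβ0 : 0 < β) (hβ1 : β < 1) (hx : 0 < x) :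
    HasDerivAt (fun y : ℝ => (1 + β) * (y * ((y + 1) ^ β - y ^ β))
        - β * ((y + 1) ^ (1 + β) - y ^ (1 + β) - 1))
      ((1 + β) * ((x + 1) ^ β - β * (x + 1) ^ (β - 1) - x ^ β)) x := by
  have hx1 : (0:ℝ) < x + 1 := by linarith
  have hadd : HasDerivAt (fun y : ℝ => y + 1) 1 x := (hasDerivAt_id x).add_const 1
  have h1 : HasDerivAt (fun y : ℝ => (y + 1) ^ β) (1 * β * (x + 1) ^ (β - 1)) x :=
    HasDerivAt.rpow_const hadd (Or.inl hx1.ne')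
  have h2 : HasDerivAt (fun y : ℝ => y ^ β) (β * x ^ (β - 1)) x :=
    Real.hasDerivAt_rpow_const (Or.inl hx.ne')
  have h3 : HasDerivAt (fun y : ℝ => (y + 1) ^ (1 + β)) (1 * (1 + β) * (x + 1) ^ (1 + β - 1)) x :=
    HasDerivAt.rpow_const hadd (Or.inl hx1.ne')
  have h4 : HasDerivAt (fun y : ℝ => y ^ (1 + β)) ((1 + β) * x ^ (1 + β - 1)) x :=
    Real.hasDerivAt_rpow_const (Or.inl hx.ne')
  have hA : HasDerivAt (fun y : ℝ => (1 + β) * (y * ((y + 1) ^ β - y ^ β)))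
      ((1 + β) * (1 * ((x + 1) ^ β - x ^ β) + x * (1 * β * (x + 1) ^ (β - 1) - β * x ^ (β - 1)))) x :=
    ((hasDerivAt_id x).mul (h1.sub h2)).const_mul (1 + β)
  have hB : HasDerivAt (fun y : ℝ => β * ((y + 1) ^ (1 + β) - y ^ (1 + β) - 1))
      (β * (1 * (1 + β) * (x + 1) ^ (1 + β - 1) - (1 + β) * x ^ (1 + β - 1))) x :=
    ((h3.sub h4).sub_const 1).const_mul β
  have := hA.sub hB
  convert this using 1
  case e'_4 => rfl
  case e'_5 => rfl
  case e'_8 => rfl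
  have e1 : (1:ℝ) + β - 1 = β := by ring
  have e2 : x ^ β = x ^ (β - 1) * x := by
    rw [← Real.rpow_add_one hx.ne' (β - 1)]; ring_nf
  have e3 : (x + 1) ^ β = (x + 1) ^ (β - 1) * (x + 1) := by
    rw [← Real.rpow_add_one hx1.ne' (β - 1)]; ring_nf
  rw [e1]
  nlinarith [e2, e3, sq_nonneg β]


lemma rho_phi_pos {β : ℝ} (hβ0 : 0 < β) (hβ1 : β < 1) {x : ℝ} (hx0 : 0 < x) (hx1 : x ≤ 1) :
    0 < (1 + β) * (x * ((x + 1) ^ β - x ^ β)) - β * ((x + 1) ^ (1 + β) - x ^ (1 + β) - 1) := by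
  set φ : ℝ → ℝ := fun y => (1 + β) * (y * ((y + 1) ^ β - y ^ β))
      - β * ((y + 1) ^ (1 + β) - y ^ (1 + β) - 1) with hφ
  have c1 : Continuous (fun y : ℝ => (y + 1) ^ β) :=
    (continuous_rpow_const hβ0.le).comp (continuous_id.add continuous_const)
  have c2 : Continuous (fun y : ℝ => y ^ β) := continuous_rpow_const hβ0.le
  have c3 : Continuous (fun y : ℝ => (y + 1) ^ (1 + β)) :=
    (continuous_rpow_const (by linarith : (0:ℝ) ≤ 1 + β)).comp (continuous_id.add continuous_const)
  have c4 : Continuous (fun y : ℝ => y ^ (1 + β)) :=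
    continuous_rpow_const (by linarith : (0:ℝ) ≤ 1 + β)
  have hcont : Continuous φ :=
    (continuous_const.mul (continuous_id.mul (c1.sub c2))).sub
      (continuous_const.mul ((c3.sub c4).sub continuous_const))
  have hmono : StrictMonoOn φ (Icc 0 1) := by
    apply strictMonoOn_of_deriv_pos (convex_Icc 0 1) hcont.continuousOn
    intro y hy
    rw [interior_Icc] at hy
    have hy0 : (0:ℝ) < y := hy.1
    have hy1 : (0:ℝ) < y + 1 := by linarith
    rw [(rho_phi_deriv hβ0 hβ1 hy0).deriv]
    have hp : (0:ℝ) < (y + 1) ^ (β - 1) := rpow_pos_of_pos hy1 _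
    have hgm := rho_amgm hβ0 hβ1 hy0
    have i1 : y ^ β * (y + 1) ^ (1 - β) * (y + 1) ^ (β - 1) = y ^ β := by
      rw [mul_assoc, ← Real.rpow_add hy1]; norm_num
    have i2 : (y + 1) ^ β = (y + 1) ^ (β - 1) * (y + 1) := by
      rw [← Real.rpow_add_one hy1.ne' (β - 1)]; ring_nf
    have key : y ^ β < (y + 1) ^ β - β * (y + 1) ^ (β - 1) := by
      have := mul_lt_mul_of_pos_right hgm hp
      nlinarith
    have : (0:ℝ) < 1 + β := by linarith
    nlinarith
  have h0 : φ 0 = 0 := by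
    simp only [hφ]
    rw [Real.zero_rpow (by positivity : (1:ℝ) + β ≠ 0)]
    norm_num
  have := hmono (Set.mem_Icc.2 ⟨le_refl 0, zero_le_one⟩) (Set.mem_Icc.2 ⟨hx0.le, hx1⟩) hx0
  rw [h0] at this
  exact this

theorem rho_lt (β : ℝ) (hβ0 : 0 < β) (hβ1 : β < 1) (z : ℝ) (hz0 : 0 < z) (hz1 : z < 1) :
    (z + 1) ^ (1 + β) - z ^ (1 + β) - 1 < 2 * ((2 : ℝ) ^ β - 1) * z ^ β := by
  set g : ℝ → ℝ := fun y => ((y + 1) ^ (1 + β) - y ^ (1 + β) - 1) * y ^ (-β) with hg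
  have hgc : ContinuousOn g (Icc z 1) := by
    intro y hy
    have hy0 : (0:ℝ) < y := lt_of_lt_of_le hz0 hy.1
    apply ContinuousAt.continuousWithinAt
    have c3 : ContinuousAt (fun y : ℝ => (y + 1) ^ (1 + β)) y :=
      ((continuous_rpow_const (by linarith : (0:ℝ) ≤ 1 + β)).comp
        (continuous_id.add continuous_const)).continuousAt
    have c4 : ContinuousAt (fun y : ℝ => y ^ (1 + β)) y :=
      (continuous_rpow_const (by linarith : (0:ℝ) ≤ 1 + β)).continuousAt
    exact ((c3.sub c4).sub continuousAt_const).mul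
      (Real.continuousAt_rpow_const y (-β) (Or.inl hy0.ne'))
  have hmono : StrictMonoOn g (Icc z 1) := by
    apply strictMonoOn_of_deriv_pos (convex_Icc z 1) hgc
    intro y hy
    rw [interior_Icc] at hy
    have hy0 : (0:ℝ) < y := lt_trans hz0 hy.1
    have hy1 : (0:ℝ) < y + 1 := by linarith
    have hadd : HasDerivAt (fun y : ℝ => y + 1) 1 y := (hasDerivAt_id y).add_const 1
    have h3 : HasDerivAt (fun w : ℝ => (w + 1) ^ (1 + β))
        (1 * (1 + β) * (y + 1) ^ (1 + β - 1)) y :=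
      HasDerivAt.rpow_const hadd (Or.inl hy1.ne')
    have h4 : HasDerivAt (fun w : ℝ => w ^ (1 + β)) ((1 + β) * y ^ (1 + β - 1)) y :=
      Real.hasDerivAt_rpow_const (Or.inl hy0.ne')
    have h5 : HasDerivAt (fun w : ℝ => w ^ (-β)) (-β * y ^ (-β - 1)) y :=
      Real.hasDerivAt_rpow_const (Or.inl hy0.ne')
    have hgd : HasDerivAt g
        ((1 * (1 + β) * (y + 1) ^ (1 + β - 1) - (1 + β) * y ^ (1 + β - 1)) * y ^ (-β)
          + ((y + 1) ^ (1 + β) - y ^ (1 + β) - 1) * (-β * y ^ (-β - 1))) y :=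
      (((h3.sub h4).sub_const 1).mul h5)
    rw [hgd.deriv]
    have e1 : (1:ℝ) + β - 1 = β := by ring
    rw [e1]
    have e2 : y ^ (-β) = y ^ (-β - 1) * y := by
      rw [← Real.rpow_add_one hy0.ne' (-β - 1)]; ring_nf
    have hphi := rho_phi_pos hβ0 hβ1 hy0 hy.2.le
    have hQ : (0:ℝ) < y ^ (-β - 1) := rpow_pos_of_pos hy0 _
    calc (0:ℝ) < y ^ (-β - 1) * ((1 + β) * (y * ((y + 1) ^ β - y ^ β))
          - β * ((y + 1) ^ (1 + β) - y ^ (1 + β) - 1)) := mul_pos hQ hphi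
      _ = ((1 + β) * (y + 1) ^ β - (1 + β) * y ^ β) * (y ^ (-β - 1) * y)
          + ((y + 1) ^ (1 + β) - y ^ (1 + β) - 1) * (-β * y ^ (-β - 1)) := by ring
      _ = (1 * (1 + β) * (y + 1) ^ β - (1 + β) * y ^ β) * y ^ (-β)
          + ((y + 1) ^ (1 + β) - y ^ (1 + β) - 1) * (-β * y ^ (-β - 1)) := by
            rw [e2]; ring
  have hlt : g z < g 1 :=
    hmono (Set.mem_Icc.2 ⟨le_refl z, hz1.le⟩) (Set.mem_Icc.2 ⟨hz1.le, le_refl 1⟩) hz1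
  have hg1 : g 1 = 2 * ((2:ℝ) ^ β - 1) := by
    simp only [hg]
    rw [Real.one_rpow, Real.one_rpow]
    norm_num
    rw [show ((2:ℝ)) = 1 + 1 by norm_num] at *
    rw [show ((1:ℝ) + 1) ^ (1 + β) = (1 + 1) ^ (1:ℝ) * (1 + 1) ^ β by
      rw [← Real.rpow_add (by norm_num)]]
    rw [Real.rpow_one]; ring
  have hzb : (0:ℝ) < z ^ β := rpow_pos_of_pos hz0 β
  have hgz : g z * z ^ β = (z + 1) ^ (1 + β) - z ^ (1 + β) - 1 := by
    simp only [hg]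
    rw [mul_assoc, ← Real.rpow_add hz0]
    norm_num
  have := mul_lt_mul_of_pos_right hlt hzb
  rw [hgz, hg1] at this
  exact this
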